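/- Let A be a self-adjoint operator with domain D(A) on a Hilbert space H, and let V be a bounded invertible operator on H of class C¹(A); then V^{−1} is also of class C¹(A), and V^{±n} map D(A) into D(A) for all n. Set B := max(‖V‖, ‖V^{−1}‖) and C := max(‖ad_A V‖, ‖ad_A V^{−1}‖). Then for every n ≥ 1 and all φ, ψ ∈ D(A): |⟨φ, V^{−n}(A(V^n ψ))⟩ − ⟨φ, Aψ⟩| ≤ C·n·B^{2n−1}·‖φ‖·‖ψ‖ and |⟨φ, V^{n}(A(V^{−n} ψ))⟩ − ⟨φ, Aψ⟩| ≤ C·n·B^{2n−1}·‖φ‖·‖ψ‖. -/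

import Mathlib

open scoped ComplexInnerProductSpace
open Filter Topology

section AuxPropag

variable {H : Type*} [NormedAddCommGroup H] [InnerProductSpace ℂ H] [CompleteSpace H]

theorem sa_graph_of (A : H →ₗ.[ℂ] H) (hdense : Dense (A.domain : Set H))
    (hsa : A.adjoint = A) (y w : H)
    (hw : ∀ x : A.domain, ⟪w, (x : H)⟫ = ⟪y, A x⟫) : (y, w) ∈ A.graph := by
  have hy : y ∈ A.adjoint.domain := LinearPMap.mem_adjoint_domain_of_exists y ⟨w, hw⟩
  have h2 : A.adjoint ⟨y, hy⟩ = w := LinearPMap.adjoint_apply_eq hdense ⟨y, hy⟩ hw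
  have h3 : (y, A.adjoint ⟨y, hy⟩) ∈ A.adjoint.graph := A.adjoint.mem_graph ⟨y, hy⟩
  rw [h2, hsa] at h3
  exact h3

theorem sa_apply_of_graph (A : H →ₗ.[ℂ] H) {y w : H} (hg : (y, w) ∈ A.graph)
    (h : y ∈ A.domain) : A ⟨y, h⟩ = w := ((A.image_iff h).mpr hg).symm

theorem sa_symm (A : H →ₗ.[ℂ] H) (hdense : Dense (A.domain : Set H))
    (hsa : A.adjoint = A) (x y : A.domain) : ⟪A x, (y : H)⟫ = ⟪(x : H), A y⟫ := by
  have hx : (x : H) ∈ A.adjoint.domain := by rw [hsa]; exact x.2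
  have h := LinearPMap.adjoint_isFormalAdjoint hdense ⟨(x : H), hx⟩ y
  obtain ⟨hdom, happ⟩ := LinearPMap.ext_iff.mp hsa
  have hval : A.adjoint ⟨(x : H), hx⟩ = A x := happ (x := (x : H)) (hf := hx) (hg := x.2)
  rw [← hval]
  exact h

theorem sa_closed_graph (A : H →ₗ.[ℂ] H) (hdense : Dense (A.domain : Set H))
    (hsa : A.adjoint = A) : IsClosed (A.graph : Set (H × H)) := by
  have hset : (A.graph : Set (H × H)) =
      ⋂ x : A.domain, {p : H × H | ⟪p.2, (x : H)⟫ = ⟪p.1, A x⟫} := by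
    ext p
    simp only [Set.mem_iInter, Set.mem_setOf_eq]
    constructor
    · intro hp x
      rcases A.mem_graph_iff.mp hp with ⟨x', h1, h2⟩
      rw [← h2, ← h1]
      exact sa_symm A hdense hsa x' x
    · intro hp
      exact sa_graph_of A hdense hsa p.1 p.2 fun x => hp x
  rw [hset]
  exact isClosed_iInter fun x =>
    isClosed_eq (continuous_snd.inner continuous_const) (continuous_fst.inner continuous_const)

theorem sa_resolvent (A : H →ₗ.[ℂ] H) (hdense : Dense (A.domain : Set H))
    (hsa : A.adjoint = A) (lam : ℝ) (hlam : lam ≠ 0) :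
    ∃ R : H →L[ℂ] H, (∀ x, ‖R x‖ ≤ |lam|⁻¹ * ‖x‖) ∧
      (∀ x : H, (R x, x + ((lam : ℂ) * Complex.I) • R x) ∈ A.graph) ∧
      (∀ χ : A.domain, R (A χ - ((lam : ℂ) * Complex.I) • (χ : H)) = χ) := by
  set μ : ℂ := (lam : ℂ) * Complex.I with hμdef
  have hlam0 : (0 : ℝ) < |lam| := abs_pos.mpr hlam
  set T : A.domain →ₗ[ℂ] H := A.toFun - μ • A.domain.subtype with hTdef
  have hT : ∀ χ : A.domain, T χ = A χ - μ • (χ : H) := by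
    intro χ
    simp [hTdef, LinearMap.sub_apply, LinearMap.smul_apply]
  -- key estimate
  have key : ∀ χ : A.domain, |lam| * ‖(χ : H)‖ ≤ ‖T χ‖ := by
    intro χ
    have hre : (⟪A χ, (χ : H)⟫ : ℂ).im = 0 := by
      have h1 : ⟪A χ, (χ : H)⟫ = (starRingEnd ℂ) ⟪A χ, (χ : H)⟫ := by
        rw [inner_conj_symm]
        exact sa_symm A hdense hsa χ χ
      have := Complex.conj_eq_iff_im.mp h1.symm
      exact this
    have hsq : ‖T χ‖ ^ 2 = ‖A χ‖ ^ 2 + |lam| ^ 2 * ‖(χ : H)‖ ^ 2 := by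
      rw [hT]
      rw [@norm_sub_sq ℂ]
      have h2 : ⟪A χ, μ • (χ : H)⟫ = μ * ⟪A χ, (χ : H)⟫ := inner_smul_right _ _ _
      have h3 : RCLike.re (⟪A χ, μ • (χ : H)⟫ : ℂ) = 0 := by
        rw [h2]
        simp only [RCLike.re_to_complex, Complex.mul_re, hμdef]
        simp [hre]
      rw [h3]
      have h4 : ‖μ • (χ : H)‖ = |lam| * ‖(χ : H)‖ := by
        rw [norm_smul]
        simp [hμdef, Complex.norm_real]
      rw [h4]
      ring
    have h5 : (|lam| * ‖(χ : H)‖) ^ 2 ≤ ‖T χ‖ ^ 2 := by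
      rw [hsq, mul_pow]
      nlinarith [sq_nonneg ‖A χ‖]
    nlinarith [norm_nonneg (T χ), mul_nonneg hlam0.le (norm_nonneg (χ : H))]
  have hinj : Function.Injective T := by
    intro χ₁ χ₂ h
    have h0 : T (χ₁ - χ₂) = 0 := by rw [map_sub, h, sub_self]
    have := key (χ₁ - χ₂)
    rw [h0, norm_zero] at this
    have hz : ‖((χ₁ - χ₂ : A.domain) : H)‖ = 0 := by
      nlinarith [norm_nonneg ((χ₁ - χ₂ : A.domain) : H)]
    have : ((χ₁ - χ₂ : A.domain) : H) = 0 := norm_eq_zero.mp hz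
    exact Subtype.ext (by simpa [sub_eq_zero] using this)
  -- range of T is closed
  have hclosed : IsClosed ((LinearMap.range T : Submodule ℂ H) : Set H) := by
    apply IsSeqClosed.isClosed
    intro u p hu hup
    have hu' : ∀ n, ∃ χ : A.domain, T χ = u n := fun n => hu n
    choose χ hχ using hu'
    have hcu : CauchySeq u := hup.cauchySeq
    have hcs : CauchySeq fun n => (χ n : H) := by
      rw [Metric.cauchySeq_iff] at hcu ⊢
      intro ε hε
      obtain ⟨N, hN⟩ := hcu (|lam| * ε) (by positivity)
      refine ⟨N, fun m hm n hn => ?_⟩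
      have h1 := key (χ m - χ n)
      have h2 : T (χ m - χ n) = u m - u n := by rw [map_sub, hχ, hχ]
      rw [h2] at h1
      have h3 : dist (u m) (u n) < |lam| * ε := hN m hm n hn
      rw [dist_eq_norm] at h3
      rw [dist_eq_norm]
      have h4 : ((χ m - χ n : A.domain) : H) = (χ m : H) - (χ n : H) := rfl
      rw [h4] at h1
      nlinarith
    obtain ⟨c, hc⟩ := cauchySeq_tendsto_of_complete hcs
    have hgr : ∀ n, ((χ n : H), u n + μ • (χ n : H)) ∈ A.graph := by
      intro n
      have := A.mem_graph (χ n)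
      have hv : A (χ n) = u n + μ • (χ n : H) := by
        rw [← hχ n, hT]; abel
      rwa [hv] at this
    have htend : Tendsto (fun n => ((χ n : H), u n + μ • (χ n : H))) atTop
        (nhds (c, p + μ • c)) := by
      exact hc.prodMk_nhds (hup.add (hc.const_smul μ))
    have hmem : (c, p + μ • c) ∈ A.graph :=
      (sa_closed_graph A hdense hsa).mem_of_tendsto htend
        (Filter.Eventually.of_forall hgr)
    have hcdom : c ∈ A.domain := LinearPMap.mem_domain_of_mem_graph hmem
    refine ⟨⟨c, hcdom⟩, ?_⟩
    rw [hT, sa_apply_of_graph A hmem hcdom]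
    abel
  -- range of T is all of H
  have htop : LinearMap.range T = ⊤ := by
    haveI : CompleteSpace (LinearMap.range T : Submodule ℂ H) := hclosed.completeSpace_coe
    rw [← Submodule.orthogonal_eq_bot_iff]
    rw [Submodule.eq_bot_iff]
    intro y hy
    rw [Submodule.mem_orthogonal] at hy
    have h0 : ∀ χ : A.domain, ⟪T χ, y⟫ = 0 := fun χ =>
      hy (T χ) (LinearMap.mem_range_self T χ)
    have hg : (y, (starRingEnd ℂ) μ • y) ∈ A.graph := by
      apply sa_graph_of A hdense hsa
      intro χ
      have h1 := h0 χ
      rw [hT, inner_sub_left, sub_eq_zero] at h1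
      have h2 : ⟪y, A χ⟫ = (starRingEnd ℂ) ⟪A χ, y⟫ := (inner_conj_symm _ _).symm
      rw [h2, h1, inner_smul_left, inner_smul_left]
      simp only [map_mul, ← inner_conj_symm y (χ : H)]
    have hydom : y ∈ A.domain := LinearPMap.mem_domain_of_mem_graph hg
    have hyval : A ⟨y, hydom⟩ = (starRingEnd ℂ) μ • y := sa_apply_of_graph A hg hydom
    have h6 := h0 ⟨y, hydom⟩
    rw [hT, hyval] at h6
    have h7 : (starRingEnd ℂ) μ • y - μ • y = (-(2 * μ)) • y := by
      have : (starRingEnd ℂ) μ = -μ := by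
        simp [hμdef, map_mul, Complex.conj_I, Complex.conj_ofReal]
      rw [this, ← sub_smul]; ring_nf
    rw [h7, inner_smul_left] at h6
    have hμ0 : μ ≠ 0 :=
      mul_ne_zero (by exact_mod_cast Complex.ofReal_ne_zero.mpr hlam) Complex.I_ne_zero
    have h8 : (starRingEnd ℂ) (-(2 * μ)) ≠ 0 := by
      simp only [map_neg, map_mul, neg_ne_zero, mul_ne_zero_iff]
      exact ⟨by norm_num, fun h => hμ0 (by simpa using congrArg (starRingEnd ℂ) h)⟩
    have h9 : ⟪y, y⟫ = (0 : ℂ) := by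
      rcases mul_eq_zero.mp h6 with h | h
      · exact absurd h h8
      · exact h
    exact inner_self_eq_zero.mp h9
  -- construct the inverse
  have hsurj : Function.Surjective T := LinearMap.range_eq_top.mp htop
  let e : A.domain ≃ₗ[ℂ] H := LinearEquiv.ofBijective T ⟨hinj, hsurj⟩
  have heq : ∀ χ : A.domain, e χ = T χ := fun χ => rfl
  let Rlin : H →ₗ[ℂ] H := (A.domain.subtype).comp (e.symm : H →ₗ[ℂ] A.domain)
  have hRlin : ∀ x : H, Rlin x = ((e.symm x : A.domain) : H) := fun x => rfl
  have hbound : ∀ x : H, ‖Rlin x‖ ≤ |lam|⁻¹ * ‖x‖ := by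
    intro x
    have h1 := key (e.symm x)
    have h2 : T (e.symm x) = x := by
      have := e.apply_symm_apply x
      rwa [heq] at this
    rw [h2] at h1
    rw [hRlin]
    rw [inv_mul_eq_div, le_div_iff₀ hlam0, mul_comm]
    exact h1
  refine ⟨Rlin.mkContinuous (|lam|⁻¹) hbound, fun x => hbound x, ?_, ?_⟩
  · intro x
    have hmem := A.mem_graph (e.symm x)
    have h2 : T (e.symm x) = x := by
      have := e.apply_symm_apply x
      rwa [heq] at this
    have hv : A (e.symm x) = x + μ • ((e.symm x : A.domain) : H) := by
      have h5 := hT (e.symm x)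
      rw [h2] at h5
      exact eq_add_of_sub_eq h5.symm
    rw [hv] at hmem
    exact hmem
  · intro χ
    have h3 : Rlin (T χ) = χ := by
      rw [hRlin]
      have : e.symm (T χ) = χ := by rw [← heq, e.symm_apply_apply]
      rw [this]
    have h4 : A χ - μ • (χ : H) = T χ := (hT χ).symm
    show Rlin _ = _
    rw [h4, h3]

theorem sa_res_adj (A : H →ₗ.[ℂ] H) (hdense : Dense (A.domain : Set H))
    (hsa : A.adjoint = A) (μ : ℂ) (hμ : (starRingEnd ℂ) μ = -μ) (R1 R2 : H →L[ℂ] H)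
    (hg1 : ∀ x, (R1 x, x + μ • R1 x) ∈ A.graph)
    (hg2 : ∀ y, (R2 y, y - μ • R2 y) ∈ A.graph) (x y : H) :
    ⟪R1 x, y⟫ = ⟪x, R2 y⟫ := by
  have hu : R1 x ∈ A.domain := LinearPMap.mem_domain_of_mem_graph (hg1 x)
  have hv : R2 y ∈ A.domain := LinearPMap.mem_domain_of_mem_graph (hg2 y)
  have huv : A ⟨R1 x, hu⟩ = x + μ • R1 x := sa_apply_of_graph A (hg1 x) hu
  have hvv : A ⟨R2 y, hv⟩ = y - μ • R2 y := sa_apply_of_graph A (hg2 y) hv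
  have hy : y = A ⟨R2 y, hv⟩ + μ • R2 y := by rw [hvv]; abel
  calc ⟪R1 x, y⟫ = ⟪R1 x, A ⟨R2 y, hv⟩ + μ • R2 y⟫ := by rw [← hy]
    _ = ⟪R1 x, A ⟨R2 y, hv⟩⟫ + μ * ⟪R1 x, R2 y⟫ := by
        rw [inner_add_right, inner_smul_right]
    _ = ⟪A ⟨R1 x, hu⟩, R2 y⟫ + μ * ⟪R1 x, R2 y⟫ := by
        rw [sa_symm A hdense hsa ⟨R1 x, hu⟩ ⟨R2 y, hv⟩]
    _ = ⟪x, R2 y⟫ + ((starRingEnd ℂ) μ + μ) * ⟪R1 x, R2 y⟫ := by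
        rw [huv, inner_add_left, inner_smul_left]; ring
    _ = ⟪x, R2 y⟫ := by rw [hμ]; ring_nf

theorem sa_res_limit (A : H →ₗ.[ℂ] H) (hdense : Dense (A.domain : Set H))
    (lam : ℕ → ℝ) (habs : ∀ n, |lam n| = n + 1) (R : ℕ → H →L[ℂ] H)
    (hb : ∀ n x, ‖R n x‖ ≤ |lam n|⁻¹ * ‖x‖)
    (hi : ∀ (n) (χ : A.domain), R n (A χ - ((lam n : ℂ) * Complex.I) • (χ : H)) = χ)
    (z : H) :
    Tendsto (fun n => (-((lam n : ℂ) * Complex.I)) • R n z) atTop (𝓝 z) := by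
  rw [Metric.tendsto_atTop]
  intro ε hε
  obtain ⟨c, hcmem, hcd⟩ := hdense.exists_dist_lt z (show (0:ℝ) < ε/3 by linarith)
  set χ : A.domain := ⟨c, hcmem⟩
  obtain ⟨N, hN⟩ := exists_nat_gt (3 * ‖A χ‖ / ε)
  refine ⟨N, fun n hn => ?_⟩
  have hμabs : ∀ m, ‖((lam m : ℂ) * Complex.I)‖ = |lam m| := by
    intro m; simp [Complex.norm_real]
  set μ : ℂ := (lam n : ℂ) * Complex.I
  have hRχ : (-μ) • R n c - c = -(R n (A χ)) := by
    have h1 := hi n χ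
    rw [map_sub, map_smul] at h1
    have h2 : R n (A χ) - μ • R n c = c := by simpa using h1
    have key2 : ∀ a b cc : H, a - μ • b = cc → (-μ) • b - cc = -a := by
      intro a b cc hh
      rw [← hh]; simp only [neg_smul]; abel
    exact key2 _ _ _ h2
  have hsplit : (-μ) • R n z - z =
      (-μ) • R n (z - c) + ((-μ) • R n c - c) + (c - z) := by
    rw [map_sub]; simp [smul_sub]; abel
  have hlampos : (0 : ℝ) < |lam n| := by rw [habs]; positivity
  have e1 : ‖(-μ) • R n (z - c)‖ ≤ ε / 3 := by
    rw [norm_smul, norm_neg, hμabs]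
    calc |lam n| * ‖R n (z - c)‖ ≤ |lam n| * (|lam n|⁻¹ * ‖z - c‖) := by
          exact mul_le_mul_of_nonneg_left (hb n _) hlampos.le
      _ = ‖z - c‖ := by field_simp
      _ ≤ ε / 3 := by rw [← dist_eq_norm]; exact hcd.le
  have e2 : ‖(-μ) • R n c - c‖ < ε / 3 := by
    rw [hRχ, norm_neg]
    calc ‖R n (A χ)‖ ≤ |lam n|⁻¹ * ‖A χ‖ := hb n _
      _ ≤ ((N : ℝ) + 1)⁻¹ * ‖A χ‖ := by
          apply mul_le_mul_of_nonneg_right _ (norm_nonneg _)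
          rw [habs]
          apply inv_anti₀ (by positivity)
          have : (N : ℝ) ≤ n := by exact_mod_cast hn
          linarith
      _ < ε / 3 := by
          have hN' : 3 * ‖A χ‖ < ε * ((N : ℝ) + 1) := by
            have h9 := (div_lt_iff₀ hε).mp hN
            nlinarith
          rw [inv_mul_eq_div, div_lt_div_iff₀ (by positivity) (by norm_num : (0:ℝ) < 3)]
          linarith
  have e3 : ‖c - z‖ < ε / 3 := by rw [norm_sub_rev, ← dist_eq_norm]; exact hcd
  rw [dist_eq_norm]
  calc ‖(-μ) • R n z - z‖ ≤ ‖(-μ) • R n (z - c) + ((-μ) • R n c - c)‖ + ‖c - z‖ := by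
        rw [hsplit]; exact norm_add_le _ _
    _ ≤ ‖(-μ) • R n (z - c)‖ + ‖(-μ) • R n c - c‖ + ‖c - z‖ := by
        have := norm_add_le ((-μ) • R n (z - c)) ((-μ) • R n c - c)
        linarith
    _ < ε / 3 + ε / 3 + ε / 3 := by linarith
    _ = ε := by ring

theorem c1_graph (A : H →ₗ.[ℂ] H) (hdense : Dense (A.domain : Set H))
    (hsa : A.adjoint = A) (W adW : H →L[ℂ] H)
    (hc : ∀ φ ψ : A.domain, ⟪A φ, W (ψ : H)⟫ - ⟪(φ : H), W (A ψ)⟫ = ⟪(φ : H), adW (ψ : H)⟫)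
    (χ : A.domain) : (W (χ : H), W (A χ) + adW (χ : H)) ∈ A.graph := by
  apply sa_graph_of A hdense hsa
  intro x
  have h := hc x χ
  have h2 : ⟪(x : H), W (A χ) + adW (χ : H)⟫ = ⟪A x, W (χ : H)⟫ := by
    rw [inner_add_right]
    have := sub_eq_iff_eq_add.mp h
    rw [this]; ring
  calc ⟪W (A χ) + adW (χ : H), (x : H)⟫
      = (starRingEnd ℂ) ⟪(x : H), W (A χ) + adW (χ : H)⟫ := (inner_conj_symm _ _).symm
    _ = (starRingEnd ℂ) ⟪A x, W (χ : H)⟫ := by rw [h2]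
    _ = ⟪W (χ : H), A x⟫ := inner_conj_symm _ _

theorem c1_pow (A : H →ₗ.[ℂ] H) (hdense : Dense (A.domain : Set H))
    (hsa : A.adjoint = A) (W adW : H →L[ℂ] H)
    (h : ∀ χ : A.domain, (W (χ : H), W (A χ) + adW (χ : H)) ∈ A.graph) :
    ∀ (n : ℕ) (χ : A.domain), ∃ d : H,
      ((W ^ n) (χ : H), (W ^ n) (A χ) + d) ∈ A.graph ∧
      ‖d‖ ≤ n * ‖adW‖ * ‖W‖ ^ (n - 1) * ‖(χ : H)‖ := by
  intro n
  induction n with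
  | zero =>
    intro χ
    refine ⟨0, ?_, by simp⟩
    simpa using A.mem_graph χ
  | succ n ih =>
    intro χ
    obtain ⟨d, hg, hd⟩ := ih χ
    have hmem : (W ^ n) (χ : H) ∈ A.domain := LinearPMap.mem_domain_of_mem_graph hg
    have hval : A ⟨(W ^ n) (χ : H), hmem⟩ = (W ^ n) (A χ) + d := sa_apply_of_graph A hg hmem
    have h2 := h ⟨(W ^ n) (χ : H), hmem⟩
    rw [hval] at h2
    refine ⟨W d + adW ((W ^ n) (χ : H)), ?_, ?_⟩
    · have hp : ∀ z : H, (W ^ (n + 1)) z = W ((W ^ n) z) := by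
        intro z; rw [pow_succ']; rfl
      rw [hp, hp]
      have : W ((W ^ n) (A χ) + d) + adW ((W ^ n) (χ : H)) =
          W ((W ^ n) (A χ)) + (W d + adW ((W ^ n) (χ : H))) := by
        rw [map_add]; abel
      rw [← this]
      exact h2
    · have hb1 : ‖W d‖ ≤ ‖W‖ * ‖d‖ := W.le_opNorm d
      have hpow : ∀ (m : ℕ) (z : H), ‖(W ^ m) z‖ ≤ ‖W‖ ^ m * ‖z‖ := by
        intro m
        induction m with
        | zero => intro z; simp
        | succ m ihm =>
          intro z
          have h1 : (W ^ (m + 1)) z = (W ^ m) (W z) := by rw [pow_succ]; rfl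
          rw [h1]
          calc ‖(W ^ m) (W z)‖ ≤ ‖W‖ ^ m * ‖W z‖ := ihm (W z)
            _ ≤ ‖W‖ ^ m * (‖W‖ * ‖z‖) :=
                mul_le_mul_of_nonneg_left (W.le_opNorm z) (by positivity)
            _ = ‖W‖ ^ (m + 1) * ‖z‖ := by rw [pow_succ]; ring
      have hb2 : ‖adW ((W ^ n) (χ : H))‖ ≤ ‖adW‖ * (‖W‖ ^ n * ‖(χ : H)‖) :=
        (adW.le_opNorm _).trans (mul_le_mul_of_nonneg_left (hpow n _) (norm_nonneg _))
      have htri : ‖W d + adW ((W ^ n) (χ : H))‖ ≤ ‖W‖ * ‖d‖ + ‖adW‖ * (‖W‖ ^ n * ‖(χ : H)‖) := by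
        calc ‖W d + adW ((W ^ n) (χ : H))‖ ≤ ‖W d‖ + ‖adW ((W ^ n) (χ : H))‖ := norm_add_le _ _
          _ ≤ ‖W‖ * ‖d‖ + ‖adW‖ * (‖W‖ ^ n * ‖(χ : H)‖) := add_le_add hb1 hb2
      simp only [Nat.add_sub_cancel, Nat.cast_add, Nat.cast_one]
      rcases Nat.eq_zero_or_pos n with hn0 | hn1
      · subst hn0
        simp only [Nat.cast_zero, zero_mul] at hd
        have hd0 : ‖d‖ = 0 := le_antisymm hd (norm_nonneg _)
        rw [hd0] at htri
        rw [pow_zero] at htri ⊢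
        push_cast
        simp only [ContinuousLinearMap.one_apply, id_eq] at htri ⊢
        nlinarith [norm_nonneg W, norm_nonneg adW, norm_nonneg (χ : H)]
      · have hWp : ‖W‖ * ‖W‖ ^ (n - 1) = ‖W‖ ^ n := by
          rw [← pow_succ']
          congr 1
          omega
        have h3 : ‖W‖ * ‖d‖ ≤ (n : ℝ) * ‖adW‖ * ‖W‖ ^ n * ‖(χ : H)‖ := by
          calc ‖W‖ * ‖d‖ ≤ ‖W‖ * ((n : ℝ) * ‖adW‖ * ‖W‖ ^ (n - 1) * ‖(χ : H)‖) :=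
              mul_le_mul_of_nonneg_left hd (norm_nonneg _)
            _ = (n : ℝ) * ‖adW‖ * (‖W‖ * ‖W‖ ^ (n - 1)) * ‖(χ : H)‖ := by ring
            _ = (n : ℝ) * ‖adW‖ * ‖W‖ ^ n * ‖(χ : H)‖ := by rw [hWp]
        nlinarith [norm_nonneg adW, norm_nonneg (χ : H), pow_nonneg (norm_nonneg W) n]

end AuxPropag

/-- Lemma 6.14 ("propag01"): let `V` be a bounded invertible operator of class `C¹(A)`.
Then `V⁻¹` is of class `C¹(A)`, `V^{±n}` preserve `D(A)`, and with
`B = max(‖V‖, ‖V⁻¹‖)`, `C = max(‖ad_A V‖, ‖ad_A V⁻¹‖)` the forms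
`⟨φ, V^{∓n}AV^{±n}ψ⟩ − ⟨φ, Aψ⟩` are bounded by `C·n·B^{2n−1}·‖φ‖·‖ψ‖` for `n ≥ 1`. -/
theorem stmt10
    {H : Type*} [NormedAddCommGroup H] [InnerProductSpace ℂ H] [CompleteSpace H]
    -- A self-adjoint (densely defined) operator on H
    (A : H →ₗ.[ℂ] H) (hdense : Dense (A.domain : Set H)) (hsa : A.adjoint = A)
    -- V a bounded invertible operator with inverse Vinv, of class C¹(A) with commutator adV
    (V Vinv adV : H →L[ℂ] H) (hV1 : V * Vinv = 1) (hV2 : Vinv * V = 1)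
    (hC1 : ∀ φ ψ : A.domain,
      ⟪A φ, V (ψ : H)⟫ - ⟪(φ : H), V (A ψ)⟫ = ⟪(φ : H), adV (ψ : H)⟫) :
    -- V⁻¹ is of class C¹(A), with commutator adVinv, ...
    ∃ adVinv : H →L[ℂ] H,
      (∀ φ ψ : A.domain,
        ⟪A φ, Vinv (ψ : H)⟫ - ⟪(φ : H), Vinv (A ψ)⟫ = ⟪(φ : H), adVinv (ψ : H)⟫) ∧
      -- ... the powers V^{±n} preserve D(A), ...
      ∃ (hm : ∀ (n : ℕ) (x : H), x ∈ A.domain → (V ^ n) x ∈ A.domain)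
        (hm' : ∀ (n : ℕ) (x : H), x ∈ A.domain → (Vinv ^ n) x ∈ A.domain),
        -- ... and the quantitative bounds hold
        ∀ n : ℕ, 1 ≤ n → ∀ φ ψ : A.domain,
          ‖⟪(φ : H), (Vinv ^ n) (A ⟨(V ^ n) (ψ : H), hm n ψ ψ.2⟩)⟫ -
              ⟪(φ : H), A ψ⟫‖ ≤
            max ‖adV‖ ‖adVinv‖ * n * max ‖V‖ ‖Vinv‖ ^ (2 * n - 1) *
              ‖(φ : H)‖ * ‖(ψ : H)‖ ∧
          ‖⟪(φ : H), (V ^ n) (A ⟨(Vinv ^ n) (ψ : H), hm' n ψ ψ.2⟩)⟫ -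
              ⟪(φ : H), A ψ⟫‖ ≤
            max ‖adV‖ ‖adVinv‖ * n * max ‖V‖ ‖Vinv‖ ^ (2 * n - 1) *
              ‖(φ : H)‖ * ‖(ψ : H)‖ := by
  classical
  have hVVinv : ∀ z : H, V (Vinv z) = z := by
    intro z
    have : (V * Vinv) z = (1 : H →L[ℂ] H) z := by rw [hV1]
    simpa using this
  have hVinvV : ∀ z : H, Vinv (V z) = z := by
    intro z
    have : (Vinv * V) z = (1 : H →L[ℂ] H) z := by rw [hV2]
    simpa using this
  have hVm : ∀ χ : A.domain, (V (χ : H), V (A χ) + adV (χ : H)) ∈ A.graph :=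
    c1_graph A hdense hsa V adV hC1
  -- the resolvent families
  choose Rp hbp hgp hip using fun n : ℕ =>
    sa_resolvent A hdense hsa ((n : ℝ) + 1) (by positivity)
  choose Rm hbm hgm him using fun n : ℕ =>
    sa_resolvent A hdense hsa (-((n : ℝ) + 1)) (by
      intro h; nlinarith [Nat.cast_nonneg (α := ℝ) n])
  set μ : ℕ → ℂ := fun n => (((n : ℝ) + 1 : ℝ) : ℂ) * Complex.I with hμdef
  have hconjμ : ∀ n, (starRingEnd ℂ) (μ n) = -(μ n) := by
    intro n
    simp [hμdef, map_mul, Complex.conj_ofReal, Complex.conj_I]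
  have hgm' : ∀ (n : ℕ) (y : H), (Rm n y, y - μ n • Rm n y) ∈ A.graph := by
    intro n y
    have h := hgm n y
    rw [Complex.ofReal_neg, neg_mul, neg_smul, ← sub_eq_add_neg] at h
    exact h
  have him' : ∀ (n : ℕ) (χ : A.domain), Rm n (A χ + μ n • (χ : H)) = χ := by
    intro n χ
    have h := him n χ
    rw [Complex.ofReal_neg, neg_mul, neg_smul, sub_neg_eq_add] at h
    exact h
  have hadj : ∀ (n : ℕ) (x y : H), ⟪Rp n x, y⟫ = ⟪x, Rm n y⟫ := fun n =>
    sa_res_adj A hdense hsa (μ n) (hconjμ n) (Rp n) (Rm n) (hgp n) (hgm' n)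
  have hadj' : ∀ (n : ℕ) (x y : H), ⟪y, Rp n x⟫ = ⟪Rm n y, x⟫ := by
    intro n x y
    calc ⟪y, Rp n x⟫ = (starRingEnd ℂ) ⟪Rp n x, y⟫ := (inner_conj_symm _ _).symm
      _ = (starRingEnd ℂ) ⟪x, Rm n y⟫ := by rw [hadj n]
      _ = ⟪Rm n y, x⟫ := inner_conj_symm _ _
  -- commutation of V with the resolvent
  have hVR : ∀ (n : ℕ) (x : H),
      V (Rp n x) = Rp n (V x) + Rp n (adV (Rp n x)) := by
    intro n x
    have humem : Rp n x ∈ A.domain := LinearPMap.mem_domain_of_mem_graph (hgp n x)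
    have huval : A ⟨Rp n x, humem⟩ = x + μ n • Rp n x := sa_apply_of_graph A (hgp n x) humem
    have hvg := hVm ⟨Rp n x, humem⟩
    rw [huval] at hvg
    have hvmem : V (Rp n x) ∈ A.domain := LinearPMap.mem_domain_of_mem_graph hvg
    have hvval : A ⟨V (Rp n x), hvmem⟩ = V (x + μ n • Rp n x) + adV (Rp n x) :=
      sa_apply_of_graph A hvg hvmem
    have h5 := hip n ⟨V (Rp n x), hvmem⟩
    rw [hvval] at h5
    have h6 : V (x + μ n • Rp n x) + adV (Rp n x) - μ n • V (Rp n x) =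
        V x + adV (Rp n x) := by
      rw [map_add, map_smul]; abel
    rw [h6, map_add] at h5
    exact h5.symm
  -- commutation of Vinv with the resolvent
  have hVinvR : ∀ (n : ℕ) (z : H),
      Rp n (Vinv z) = Vinv (Rp n z) + Vinv (Rp n (adV (Rp n (Vinv z)))) := by
    intro n z
    have h1 := hVR n (Vinv z)
    rw [hVVinv z] at h1
    have h2 := congrArg Vinv h1
    rw [hVinvV, map_add] at h2
    exact h2
  set Wa : H →L[ℂ] H := ContinuousLinearMap.adjoint Vinv with hWa
  set adVinv : H →L[ℂ] H := -(Vinv.comp (adV.comp Vinv)) with hadVinv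
  have hadVinv_apply : ∀ z : H, adVinv z = -(Vinv (adV (Vinv z))) := by
    intro z; simp [hadVinv]
  -- the C¹ identity for Vinv
  have hC1inv : ∀ φ ψ : A.domain,
      ⟪A φ, Vinv (ψ : H)⟫ - ⟪(φ : H), Vinv (A ψ)⟫ = ⟪(φ : H), adVinv (ψ : H)⟫ := by
    intro φ ψ
    set F : ℂ := ⟪A φ, Vinv (ψ : H)⟫ - ⟪(φ : H), Vinv (A ψ)⟫ with hF
    set x : ℕ → H := fun n => A ψ - μ n • (ψ : H) with hxdef
    set y : ℕ → H := fun n => A φ + μ n • (φ : H) with hydef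
    set b : ℕ → H := fun n => Rp n (Vinv (x n)) with hbdef
    set a : ℕ → H := fun n => Rm n (Wa (y n)) with hadef
    -- the constant identity
    have hid : ∀ n : ℕ, F = -⟪a n, adV (b n)⟫ := by
      intro n
      have hx : Rp n (x n) = ψ := hip n ψ
      have hy : Rm n (y n) = φ := him' n φ
      calc F = ⟪y n, Vinv (Rp n (x n))⟫ - ⟪y n, Rp n (Vinv (x n))⟫ := by
            rw [hx]
            rw [hadj' n (Vinv (x n)) (y n), hy]
            rw [hF, hydef, hxdef]
            simp only [map_sub, map_smul, inner_add_left, inner_smul_left,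
              inner_sub_right, inner_smul_right, hconjμ n]
            ring
        _ = -⟪y n, Vinv (Rp n (adV (b n)))⟫ := by
            rw [← inner_sub_right, hVinvR n (x n)]
            rw [sub_add_cancel_left, inner_neg_right, hbdef]
        _ = -⟪Wa (y n), Rp n (adV (b n))⟫ := by
            rw [hWa, ContinuousLinearMap.adjoint_inner_left]
        _ = -⟪a n, adV (b n)⟫ := by
            rw [hadef, hadj' n (adV (b n)) (Wa (y n))]
    -- limits
    have hlimp : ∀ z : H, Filter.Tendsto (fun n => (-(μ n)) • Rp n z)
        Filter.atTop (nhds z) :=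
      sa_res_limit A hdense (fun n => (n : ℝ) + 1)
        (fun n => abs_of_pos (by positivity)) Rp hbp hip
    have hlimm : ∀ z : H, Filter.Tendsto (fun n => (μ n) • Rm n z)
        Filter.atTop (nhds z) := by
      intro z
      have h := sa_res_limit A hdense (fun n => -((n : ℝ) + 1))
        (fun n => by rw [abs_neg]; exact abs_of_pos (by positivity)) Rm hbm him z
      have heq : (fun n : ℕ => (-((↑(-((n : ℝ) + 1)) : ℂ) * Complex.I)) • Rm n z) =
          fun n : ℕ => (μ n) • Rm n z := by
        funext n
        rw [Complex.ofReal_neg, neg_mul, neg_neg]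
      rwa [heq] at h
    have hzero : ∀ (w : H), Filter.Tendsto (fun n => ‖Rp n w‖) Filter.atTop (nhds 0) ∧
        Filter.Tendsto (fun n => ‖Rm n w‖) Filter.atTop (nhds 0) := by
      intro w
      have hg : Filter.Tendsto (fun n : ℕ => ((n : ℝ) + 1)⁻¹ * ‖w‖)
          Filter.atTop (nhds 0) := by
        have := tendsto_one_div_add_atTop_nhds_zero_nat.mul_const ‖w‖
        rw [zero_mul] at this
        simpa [one_div] using this
      constructor
      · apply squeeze_zero (fun n => norm_nonneg _) (fun n => ?_) hg
        have := hbp n w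
        rwa [abs_of_pos (by positivity : (0:ℝ) < (n : ℝ) + 1)] at this
      · apply squeeze_zero (fun n => norm_nonneg _) (fun n => ?_) hg
        have := hbm n w
        rwa [abs_neg, abs_of_pos (by positivity : (0:ℝ) < (n : ℝ) + 1)] at this
    have hbtend : Filter.Tendsto b Filter.atTop (nhds (Vinv (ψ : H))) := by
      have hbeq : b = fun n => Rp n (Vinv (A ψ)) + (-(μ n)) • Rp n (Vinv (ψ : H)) := by
        funext n
        rw [hbdef, hxdef]
        simp only [map_sub, map_smul, neg_smul]
        abel
      rw [hbeq]
      have h1 : Filter.Tendsto (fun n => Rp n (Vinv (A ψ))) Filter.atTop (nhds 0) :=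
        tendsto_zero_iff_norm_tendsto_zero.mpr (hzero (Vinv (A ψ))).1
      have := h1.add (hlimp (Vinv (ψ : H)))
      rwa [zero_add] at this
    have hatend : Filter.Tendsto a Filter.atTop (nhds (Wa (φ : H))) := by
      have haeq : a = fun n => Rm n (Wa (A φ)) + (μ n) • Rm n (Wa (φ : H)) := by
        funext n
        rw [hadef, hydef]
        simp only [map_add, map_smul]
      rw [haeq]
      have h1 : Filter.Tendsto (fun n => Rm n (Wa (A φ))) Filter.atTop (nhds 0) :=
        tendsto_zero_iff_norm_tendsto_zero.mpr (hzero (Wa (A φ))).2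
      have := h1.add (hlimm (Wa (φ : H)))
      rwa [zero_add] at this
    have hStend : Filter.Tendsto (fun n => -⟪a n, adV (b n)⟫) Filter.atTop
        (nhds (-⟪Wa (φ : H), adV (Vinv (ψ : H))⟫)) := by
      have hadVb : Filter.Tendsto (fun n => adV (b n)) Filter.atTop
          (nhds (adV (Vinv (ψ : H)))) := (adV.continuous.tendsto _).comp hbtend
      exact (hatend.inner hadVb).neg
    have hconst : Filter.Tendsto (fun _ : ℕ => F) Filter.atTop
        (nhds (-⟪Wa (φ : H), adV (Vinv (ψ : H))⟫)) := by
      have : (fun _ : ℕ => F) = fun n => -⟪a n, adV (b n)⟫ := funext fun n => hid n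
      rwa [this]
    have hFeq : F = -⟪Wa (φ : H), adV (Vinv (ψ : H))⟫ :=
      tendsto_nhds_unique tendsto_const_nhds hconst
    rw [hFeq, hadVinv_apply, inner_neg_right, hWa,
      ContinuousLinearMap.adjoint_inner_left]
  refine ⟨adVinv, hC1inv, ?_⟩
  have hVinvm : ∀ χ : A.domain, (Vinv (χ : H), Vinv (A χ) + adVinv (χ : H)) ∈ A.graph :=
    c1_graph A hdense hsa Vinv adVinv hC1inv
  have hpowV := c1_pow A hdense hsa V adV hVm
  have hpowVi := c1_pow A hdense hsa Vinv adVinv hVinvm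
  have hm : ∀ (n : ℕ) (x : H), x ∈ A.domain → (V ^ n) x ∈ A.domain := by
    intro n x hx
    obtain ⟨d, hg, -⟩ := hpowV n ⟨x, hx⟩
    exact LinearPMap.mem_domain_of_mem_graph hg
  have hm' : ∀ (n : ℕ) (x : H), x ∈ A.domain → (Vinv ^ n) x ∈ A.domain := by
    intro n x hx
    obtain ⟨d, hg, -⟩ := hpowVi n ⟨x, hx⟩
    exact LinearPMap.mem_domain_of_mem_graph hg
  refine ⟨hm, hm', ?_⟩
  intro n hn φ ψ
  have hcancel1 : ∀ z : H, (Vinv ^ n) ((V ^ n) z) = z := by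
    have hmul : ∀ m : ℕ, (Vinv ^ m) * (V ^ m) = 1 := by
      intro m
      induction m with
      | zero => simp
      | succ m ih =>
        rw [pow_succ Vinv, pow_succ' V, mul_assoc, ← mul_assoc Vinv V (V ^ m), hV2,
          one_mul, ih]
    intro z
    have := congrArg (fun T : H →L[ℂ] H => T z) (hmul n)
    simpa using this
  have hcancel2 : ∀ z : H, (V ^ n) ((Vinv ^ n) z) = z := by
    have hmul : ∀ m : ℕ, (V ^ m) * (Vinv ^ m) = 1 := by
      intro m
      induction m with
      | zero => simp
      | succ m ih =>
        rw [pow_succ V, pow_succ' Vinv, mul_assoc, ← mul_assoc V Vinv (Vinv ^ m), hV1,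
          one_mul, ih]
    intro z
    have := congrArg (fun T : H →L[ℂ] H => T z) (hmul n)
    simpa using this
  have key : ∀ W W' adW : H →L[ℂ] H, (∀ z : H, (W' ^ n) ((W ^ n) z) = z) →
      (∀ (m : ℕ) (χ : A.domain), ∃ d : H,
        ((W ^ m) (χ : H), (W ^ m) (A χ) + d) ∈ A.graph ∧
        ‖d‖ ≤ m * ‖adW‖ * ‖W‖ ^ (m - 1) * ‖(χ : H)‖) →
      ‖adW‖ ≤ max ‖adV‖ ‖adVinv‖ → ‖W‖ ≤ max ‖V‖ ‖Vinv‖ → ‖W'‖ ≤ max ‖V‖ ‖Vinv‖ →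
      ∀ h0 : (W ^ n) (ψ : H) ∈ A.domain,
      ‖⟪(φ : H), (W' ^ n) (A ⟨(W ^ n) (ψ : H), h0⟩)⟫ - ⟪(φ : H), A ψ⟫‖ ≤
        max ‖adV‖ ‖adVinv‖ * n * max ‖V‖ ‖Vinv‖ ^ (2 * n - 1) *
          ‖(φ : H)‖ * ‖(ψ : H)‖ := by
    intro W W' adW hcan hpow hCb hBb hBb' h0
    obtain ⟨d, hg, hd⟩ := hpow n ψ
    have hval : A ⟨(W ^ n) (ψ : H), h0⟩ = (W ^ n) (A ψ) + d := sa_apply_of_graph A hg h0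
    rw [hval]
    have heq : (W' ^ n) ((W ^ n) (A ψ) + d) = A ψ + (W' ^ n) d := by
      rw [map_add, hcan]
    rw [heq]
    have heq2 : ⟪(φ : H), A ψ + (W' ^ n) d⟫ - ⟪(φ : H), A ψ⟫ = ⟪(φ : H), (W' ^ n) d⟫ := by
      rw [inner_add_right]; ring
    rw [heq2]
    have hW'pow : ∀ (m : ℕ) (z : H), ‖(W' ^ m) z‖ ≤ ‖W'‖ ^ m * ‖z‖ := by
      intro m
      induction m with
      | zero => intro z; simp
      | succ m ihm =>
        intro z
        have h1 : (W' ^ (m + 1)) z = (W' ^ m) (W' z) := by rw [pow_succ]; rfl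
        rw [h1]
        calc ‖(W' ^ m) (W' z)‖ ≤ ‖W'‖ ^ m * ‖W' z‖ := ihm (W' z)
          _ ≤ ‖W'‖ ^ m * (‖W'‖ * ‖z‖) :=
              mul_le_mul_of_nonneg_left (W'.le_opNorm z) (by positivity)
          _ = ‖W'‖ ^ (m + 1) * ‖z‖ := by rw [pow_succ]; ring
    have hBnn : (0 : ℝ) ≤ max ‖V‖ ‖Vinv‖ := le_trans (norm_nonneg V) (le_max_left _ _)
    calc ‖⟪(φ : H), (W' ^ n) d⟫‖ ≤ ‖(φ : H)‖ * ‖(W' ^ n) d‖ := norm_inner_le_norm _ _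
      _ ≤ ‖(φ : H)‖ * (‖W'‖ ^ n * ‖d‖) :=
          mul_le_mul_of_nonneg_left (hW'pow n d) (norm_nonneg _)
      _ ≤ ‖(φ : H)‖ * (‖W'‖ ^ n * ((n : ℝ) * ‖adW‖ * ‖W‖ ^ (n - 1) * ‖(ψ : H)‖)) := by
          apply mul_le_mul_of_nonneg_left _ (norm_nonneg _)
          exact mul_le_mul_of_nonneg_left hd (by positivity)
      _ ≤ ‖(φ : H)‖ * (max ‖V‖ ‖Vinv‖ ^ n *
            ((n : ℝ) * max ‖adV‖ ‖adVinv‖ * max ‖V‖ ‖Vinv‖ ^ (n - 1) * ‖(ψ : H)‖)) := by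
          gcongr
      _ = max ‖adV‖ ‖adVinv‖ * (n : ℝ) *
            (max ‖V‖ ‖Vinv‖ ^ n * max ‖V‖ ‖Vinv‖ ^ (n - 1)) * ‖(φ : H)‖ * ‖(ψ : H)‖ := by
          ring
      _ = max ‖adV‖ ‖adVinv‖ * (n : ℝ) * max ‖V‖ ‖Vinv‖ ^ (2 * n - 1) *
            ‖(φ : H)‖ * ‖(ψ : H)‖ := by
          rw [← pow_add, show n + (n - 1) = 2 * n - 1 from by omega]
  exact ⟨key V Vinv adV hcancel1 hpowV (le_max_left _ _) (le_max_left _ _)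
      (le_max_right _ _) (hm n ψ ψ.2),
    key Vinv V adVinv hcancel2 hpowVi (le_max_right _ _) (le_max_right _ _)
      (le_max_left _ _) (hm' n ψ ψ.2)⟩
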